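/- Let b be a natural number with b even and b ≥ 2. Then: (1) the Frobenius number of SC⁺(b,0) is b − 1; (2) the Frobenius number of SC⁺(b,1) is b³ − 1; (3) for every n ≥ 2, the Frobenius number of SC⁺(b,n) is (b−1)·(b^(2n) + b^n + 1). -/

import Mathlib

/-- The Cunningham numerical semigroup: the additive submonoid of ℕ generated by
`{b^(n+i) + 1 : i ∈ ℕ}`. -/
def cunninghamSemigroup (b n : ℕ) : AddSubmonoid ℕ :=
  AddSubmonoid.closure {m : ℕ | ∃ i : ℕ, m = b ^ (n + i) + 1}

namespace CunninghamAux

/-- The sum of powers of `b` with exponents from the list `l`. -/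
def pSum (b : ℕ) (l : List ℕ) : ℕ := (l.map (b ^ ·)).sum

lemma pSum_nil (b : ℕ) : pSum b [] = 0 := rfl

lemma pSum_cons (b a : ℕ) (l : List ℕ) : pSum b (a :: l) = b ^ a + pSum b l := by
  simp [pSum]

lemma genSum (b n : ℕ) (l : List ℕ) :
    (l.map (fun e => b ^ (n + e) + 1)).sum = b ^ n * pSum b l + l.length := by
  induction l with
  | nil => simp [pSum]
  | cons a t ih =>
    simp only [List.map_cons, List.sum_cons, ih, pSum_cons, List.length_cons]
    rw [pow_add]
    ring

lemma ex_list (b n : ℕ) : ∀ L : List ℕ, (∀ y ∈ L, ∃ i : ℕ, y = b ^ (n + i) + 1) →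
    ∃ l : List ℕ, (l.map (fun e => b ^ (n + e) + 1)).sum = L.sum := by
  intro L
  induction L with
  | nil => exact fun _ => ⟨[], rfl⟩
  | cons a t ih =>
    intro h
    obtain ⟨i, hi⟩ := h a (by simp)
    obtain ⟨l, hl⟩ := ih (fun y hy => h y (by simp [hy]))
    exact ⟨i :: l, by simp [hl, hi]⟩

lemma mem_iff (b n m : ℕ) :
    m ∈ cunninghamSemigroup b n ↔ ∃ l : List ℕ, b ^ n * pSum b l + l.length = m := by
  constructor
  · intro hm
    obtain ⟨L, hL, hsum⟩ := AddSubmonoid.exists_list_of_mem_closure hm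
    obtain ⟨l, hl⟩ := ex_list b n L hL
    exact ⟨l, by rw [← genSum, hl, hsum]⟩
  · rintro ⟨l, rfl⟩
    rw [← genSum]
    refine AddSubmonoid.list_sum_mem _ ?_
    intro x hx
    simp only [List.mem_map] at hx
    obtain ⟨e, _, rfl⟩ := hx
    exact AddSubmonoid.subset_closure ⟨e, rfl⟩

lemma length_le_pSum {b : ℕ} (hb : 1 ≤ b) (l : List ℕ) : l.length ≤ pSum b l := by
  induction l with
  | nil => simp [pSum]
  | cons a t ih =>
    rw [pSum_cons]
    have h1 : 1 ≤ b ^ a := Nat.one_le_pow _ _ (by omega)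
    simp only [List.length_cons]
    omega

lemma pSum_modEq_length {b : ℕ} (hb : 1 ≤ b) (l : List ℕ) :
    pSum b l ≡ l.length [MOD b - 1] := by
  induction l with
  | nil => rfl
  | cons a t ih =>
    rw [pSum_cons]
    have hb1 : b ≡ 1 [MOD b - 1] := ((Nat.modEq_iff_dvd' (by omega)).2 dvd_rfl).symm
    have hpow : b ^ a ≡ 1 [MOD b - 1] := by simpa using hb1.pow a
    have := hpow.add ih
    simpa [List.length_cons, Nat.add_comm] using this

lemma pSum_modEq_count {b : ℕ} (l : List ℕ) : pSum b l ≡ l.count 0 [MOD b] := by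
  induction l with
  | nil => rfl
  | cons a t ih =>
    rw [pSum_cons]
    rcases Nat.eq_zero_or_pos a with ha | ha
    · subst ha
      have := (Nat.ModEq.refl 1).add ih
      simpa [List.count_cons, Nat.add_comm] using this
    · have h0 : b ^ a ≡ 0 [MOD b] := Nat.modEq_zero_iff_dvd.2 (dvd_pow_self b (by omega))
      have := h0.add ih
      have hcount : (a :: t).count 0 = t.count 0 := by
        simp [List.count_cons]
        omega
      simpa [hcount] using this

lemma pSum_of_all_zero {b : ℕ} {l : List ℕ} (h : ∀ x ∈ l, x = 0) : pSum b l = l.length := by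
  induction l with
  | nil => rfl
  | cons a t ih =>
    have ha : a = 0 := h a (by simp)
    rw [pSum_cons, ha, ih (fun x hx => h x (by simp [hx]))]
    simp [Nat.add_comm]

lemma pad {b : ℕ} (hb : 2 ≤ b) : ∀ (d : ℕ) (l : List ℕ) (k : ℕ),
    l.length + d * (b - 1) = k → k ≤ pSum b l →
    ∃ l' : List ℕ, l'.length = k ∧ pSum b l' = pSum b l := by
  intro d
  induction d with
  | zero => intro l k h _; exact ⟨l, by omega, rfl⟩
  | succ d ih =>
    intro l k hlen hk
    have hd : l.length + (d * (b - 1) + (b - 1)) = k := by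
      rw [Nat.succ_mul] at hlen; omega
    have hex : ∃ e ∈ l, e ≠ 0 := by
      by_contra h
      push_neg at h
      have h0 : pSum b l = l.length := pSum_of_all_zero h
      omega
    obtain ⟨e, hel, he0⟩ := hex
    obtain ⟨e', rfl⟩ : ∃ e', e = e' + 1 := ⟨e - 1, by omega⟩
    set l₂ := List.replicate b e' ++ l.erase (e' + 1) with hl₂
    have hperm : l.Perm ((e' + 1) :: l.erase (e' + 1)) := List.perm_cons_erase hel
    have hsum_eq : pSum b l = b ^ (e' + 1) + pSum b (l.erase (e' + 1)) := by
      have h1 := (hperm.map (b ^ ·)).sum_eq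
      simpa [pSum, pSum_cons] using h1
    have hsum2 : pSum b l₂ = pSum b l := by
      rw [hsum_eq, hl₂]
      simp only [pSum, List.map_append, List.sum_append, List.map_replicate,
        List.sum_replicate, smul_eq_mul]
      rw [pow_succ]
      ring
    have hlen2 : l₂.length = l.length + (b - 1) := by
      have hpl := hperm.length_eq
      simp only [hl₂, List.length_append, List.length_replicate] at *
      simp at hpl
      omega
    obtain ⟨l', h1, h2⟩ := ih l₂ k (by omega) (by omega)
    exact ⟨l', h1, h2.trans hsum2⟩

lemma not_mem {b : ℕ} (hb : 2 ≤ b) (hbe : Even b) {n : ℕ} (hn : 1 ≤ n) :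
    (b - 1) * (b ^ (2 * n) + b ^ n + 1) ∉ cunninghamSemigroup b n := by
  intro hmem
  rw [mem_iff] at hmem
  obtain ⟨l, hl⟩ := hmem
  obtain ⟨x, hx⟩ := hbe
  set c := b - 1 with hc
  set B := b ^ n with hB
  set M := pSum b l with hM
  set k := l.length with hk
  have hBb : b ≤ B := Nat.le_self_pow (by omega) b
  have hB2 : b ^ (2 * n) = B * B := by rw [two_mul, pow_add]
  rw [hB2] at hl
  have hc1 : 1 ≤ c := by omega
  have hkM : k ≤ M := length_le_pSum (by omega) l
  have hcB : c < B := by omega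
  have hFsplit : c * (B * B + B + 1) = B * (c * B + c) + c := by ring
  have hkmod : k % B = c := by
    have h1 : (B * M + k) % B = k % B := Nat.mul_add_mod B M k
    rw [hl, hFsplit, Nat.mul_add_mod] at h1
    rw [← h1, Nat.mod_eq_of_lt hcB]
  set t := k / B with ht
  have hkt : B * t + c = k := by rw [← hkmod]; exact Nat.div_add_mod k B
  have hkub : k * B + k ≤ c * (B * B + B + 1) := by
    have h2 : k * B ≤ M * B := Nat.mul_le_mul_right B hkM
    have h3 : M * B = B * M := Nat.mul_comm M B
    omega
  have hFlt : c * (B * B + B + 1) < (b * B) * B + b * B := by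
    have h1 : B ≤ B * B := Nat.le_mul_of_pos_left B (by positivity)
    have hb1 : b = c + 1 := by omega
    have h2 : (b * B) * B + b * B = c * (B * B) + B * B + c * B + B := by rw [hb1]; ring
    have h3 : c * (B * B + B + 1) = c * (B * B) + c * B + c := by ring
    omega
  have hkb : k < b * B := by
    by_contra hcon
    push_neg at hcon
    have h4 : (b * B) * B ≤ k * B := Nat.mul_le_mul_right B hcon
    omega
  have htc : t ≤ c := by
    rcases Nat.lt_or_ge t b with h | h
    · omega
    · exfalso
      have h5 : B * b ≤ B * t := Nat.mul_le_mul_left B h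
      have h6 : b * B = B * b := Nat.mul_comm b B
      omega
  have hbc : b ≡ 1 [MOD c] := ((Nat.modEq_iff_dvd' (by omega)).2 dvd_rfl).symm
  have hBc : B ≡ 1 [MOD c] := by simpa [hB] using hbc.pow n
  have hMk : M ≡ k [MOD c] := pSum_modEq_length (by omega) l
  have hmain : B * M + k ≡ 1 * k + k [MOD c] := (hBc.mul hMk).add_right k
  have hF0 : (B * M + k) % c = 0 := by rw [hl]; simp [Nat.mul_mod_right]
  have h2k : c ∣ 2 * k := by
    have h5 : (1 * k + k) % c = 0 := by rw [← hmain]; exact hF0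
    have h6 : c ∣ 1 * k + k := Nat.dvd_of_mod_eq_zero h5
    have h7 : 1 * k + k = 2 * k := by ring
    rwa [h7] at h6
  have hck : c ∣ k := by
    have hcop : Nat.Coprime c 2 := ((Nat.prime_two.coprime_iff_not_dvd).2 (by omega)).symm
    exact hcop.dvd_of_dvd_mul_left h2k
  have hct : c ∣ t := by
    have h6 : B * t + c ≡ 1 * t + c [MOD c] := (hBc.mul_right t).add_right c
    have h7 : (1 * t + c) % c = 0 := by
      rw [← h6, hkt]
      exact Nat.mod_eq_zero_of_dvd hck
    have h8 : c ∣ t + c := by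
      have := Nat.dvd_of_mod_eq_zero h7
      rwa [one_mul] at this
    have h9 := Nat.dvd_sub h8 (dvd_refl c)
    simpa using h9
  rcases Nat.eq_zero_or_pos t with ht0 | htpos
  · -- t = 0, k = c, M = c*B + c, count argument
    rw [ht0, Nat.mul_zero] at hkt
    have hkc : k = c := by omega
    have hM2 : M = c * B + c := by
      have h8 : B * M + k = B * (c * B + c) + c := by rw [hl]; ring
      have h9 : B * M = B * (c * B + c) := by omega
      exact Nat.eq_of_mul_eq_mul_left (by omega) h9
    have hbB2 : b ∣ B := dvd_pow_self b (by omega)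
    have hMa : M ≡ l.count 0 [MOD b] := pSum_modEq_count l
    have hMc : M ≡ c [MOD b] := by
      have h10 : c * B + c ≡ 0 + c [MOD b] :=
        (Nat.modEq_zero_iff_dvd.2 (hbB2.mul_left c)).add_right c
      simpa [← hM2] using h10
    have hcount : l.count 0 = c := by
      have h10 : l.count 0 % b = c % b := hMa.symm.trans hMc
      have hle : l.count 0 ≤ k := by rw [hk]; exact List.count_le_length
      rw [Nat.mod_eq_of_lt (by omega), Nat.mod_eq_of_lt (by omega)] at h10
      exact h10
    have hall : ∀ y ∈ l, y = 0 := by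
      have h11 : l.count 0 = l.length := by omega
      intro y hy
      exact (List.count_eq_length.mp h11 y hy).symm
    have h12 : M = k := by rw [hM, hk]; exact pSum_of_all_zero hall
    have h13 : c * 2 ≤ c * B := Nat.mul_le_mul_left c (by omega)
    omega
  · -- t = c, k = B*c + c, M = c*B : contradiction with k ≤ M
    have htc2 : t = c := le_antisymm htc (Nat.le_of_dvd htpos hct)
    have hkval : k = B * c + c := by rw [← hkt, htc2]
    have hM2 : M = c * B := by
      have h8 : B * M + k = B * (c * B) + (B * c + c) := by rw [hl]; ring
      have h9 : B * M = B * (c * B) := by omega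
      exact Nat.eq_of_mul_eq_mul_left (by omega) h9
    have hcomm : B * c = c * B := Nat.mul_comm B c
    omega

lemma window_mem {b : ℕ} (hb : 2 ≤ b) (hbe : Even b) {n : ℕ} (hn : 1 ≤ n) {j : ℕ}
    (hj1 : 1 ≤ j) (hj2 : j ≤ b ^ n) :
    (b - 1) * (b ^ (2 * n) + b ^ n + 1) + j ∈ cunninghamSemigroup b n := by
  obtain ⟨x, hx⟩ := hbe
  set c := b - 1 with hc
  set B := b ^ n with hB
  have hc1 : 1 ≤ c := by omega
  have hcb : c + 1 = b := by omega
  have hBb : b ≤ B := Nat.le_self_pow (by omega) b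
  set t₀ := ((c - j % c) * x) % c with ht₀def
  have ht₀c : t₀ < c := Nat.mod_lt _ (by omega)
  have hbc : b ≡ 1 [MOD c] := ((Nat.modEq_iff_dvd' (by omega)).2 dvd_rfl).symm
  have hBc : B ≡ 1 [MOD c] := by simpa [hB] using hbc.pow n
  have hjc : j % c < c := Nat.mod_lt _ (by omega)
  have hdvd : c ∣ j + 2 * t₀ := by
    have h1 : 2 * t₀ ≡ 2 * ((c - j % c) * x) [MOD c] := (Nat.mod_modEq _ c).mul_left 2
    have h4 : j ≡ j % c [MOD c] := (Nat.mod_modEq j c).symm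
    have e1 : j + 2 * t₀ ≡ j % c + 2 * ((c - j % c) * x) [MOD c] := h4.add h1
    have h2 : 2 * ((c - j % c) * x) = (c - j % c) * b := by rw [← hx.symm]; ring
    rw [h2] at e1
    have e2 : j + 2 * t₀ ≡ j % c + (c - j % c) * 1 [MOD c] := e1.trans ((hbc.mul_left _).add_left _)
    have e3 : j % c + (c - j % c) * 1 = c := by omega
    rw [e3] at e2
    exact Nat.modEq_zero_iff_dvd.1 (e2.trans (Nat.modEq_zero_iff_dvd.2 dvd_rfl))
  set s := c - t₀ with hsdef
  have hst : t₀ + s = c := by omega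
  have hs1 : 1 ≤ s := by omega
  set k := c + j + t₀ * B with hk
  set l₀ := List.replicate c n ++ List.replicate s 0 with hl₀
  have hlen₀ : l₀.length = c + s := by simp [hl₀]
  have hpsum₀ : pSum b l₀ = c * B + s := by
    simp [pSum, hl₀, List.map_append, List.map_replicate, List.sum_append,
      List.sum_replicate, smul_eq_mul, hB]
  have hlen_le : c + s ≤ k := by
    rcases Nat.eq_zero_or_pos t₀ with h0 | hpos
    · have hdj : c ∣ j := by simpa [h0] using hdvd
      have hcj : c ≤ j := Nat.le_of_dvd (by omega) hdj
      rw [hk, h0, Nat.zero_mul]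
      omega
    · have h1 : B ≤ t₀ * B := Nat.le_mul_of_pos_left B hpos
      rw [hk]
      have hsc : s ≤ c := by omega
      linarith
  have hkM : k ≤ c * B + s := by
    rw [hk]
    rcases Nat.lt_or_ge (t₀ + 2) (c + 1) with hcase | hcase
    · -- t₀ + 2 ≤ c
      have h1 : (t₀ + 2) * B ≤ c * B := Nat.mul_le_mul_right B (by omega)
      have h2 : (t₀ + 2) * B = t₀ * B + 2 * B := by ring
      have hcB : c < B := by omega
      linarith
    · -- t₀ = c - 1
      have ht₀1 : t₀ + 1 = c := by omega
      by_contra hcon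
      push_neg at hcon
      have hcb2 : c * B = t₀ * B + B := by rw [← ht₀1]; ring
      have hs1' : s = 1 := by omega
      have hj3 : B + s < c + j := by linarith
      have hd2 : c ∣ B - 1 := (Nat.modEq_iff_dvd' (by omega)).1 hBc.symm
      have hd1 : (c : ℤ) ∣ ((j + 2 * t₀ : ℕ) : ℤ) := Int.natCast_dvd_natCast.2 hdvd
      push_cast at hd1
      have hd2' : (c : ℤ) ∣ (B : ℤ) - 1 := by
        have h5 := Int.natCast_dvd_natCast.2 hd2
        rwa [Nat.cast_sub (by omega : 1 ≤ B)] at h5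
      have ht₀' : (t₀ : ℤ) + 1 = c := by exact_mod_cast ht₀1
      have heq : (B : ℤ) + 1 - j = ((B : ℤ) - 1) - ((j : ℤ) + 2 * t₀) + 2 * c := by
        linear_combination 2 * ht₀'
      have hd3 : (c : ℤ) ∣ (B : ℤ) + 1 - j := by
        rw [heq]
        exact dvd_add (dvd_sub hd2' hd1) (Dvd.dvd.mul_left dvd_rfl 2)
      have hpos : (0 : ℤ) < (B : ℤ) + 1 - j := by
        have : j ≤ B := hj2
        omega
      have hlast := Int.le_of_dvd hpos hd3
      omega
  obtain ⟨d, hdd⟩ := by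
    -- c ∣ k - (c + s)
    have hd1 : (c : ℤ) ∣ ((j + 2 * t₀ : ℕ) : ℤ) := Int.natCast_dvd_natCast.2 hdvd
    push_cast at hd1
    have hd2 : c ∣ B - 1 := (Nat.modEq_iff_dvd' (by omega)).1 hBc.symm
    have hd2' : (c : ℤ) ∣ (B : ℤ) - 1 := by
      have h5 := Int.natCast_dvd_natCast.2 hd2
      rwa [Nat.cast_sub (by omega : 1 ≤ B)] at h5
    have hint : (c : ℤ) ∣ ((k - (c + s) : ℕ) : ℤ) := by
      rw [Nat.cast_sub hlen_le]
      have hs' : (t₀ : ℤ) + s = c := by exact_mod_cast hst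
      have heq : (k : ℕ) - ((c : ℤ) + s) = ((j : ℤ) + 2 * t₀) + t₀ * ((B : ℤ) - 1) - c := by
        rw [hk]
        push_cast
        linear_combination -hs'
      push_cast
      rw [heq]
      exact dvd_sub (dvd_add hd1 (Dvd.dvd.mul_left hd2' t₀)) dvd_rfl
    exact Int.natCast_dvd_natCast.1 hint
  -- hdd : k - (c + s) = c * d
  have h2 : (c + s) + c * d = k := by rw [← hdd]; exact Nat.add_sub_cancel' hlen_le
  obtain ⟨l', hl'len, hl'sum⟩ :=
    pad hb d l₀ k (by rw [hlen₀, ← hc, Nat.mul_comm d c]; exact h2)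
      (by rw [hpsum₀]; exact hkM)
  rw [mem_iff]
  refine ⟨l', ?_⟩
  rw [hl'len, hl'sum, hpsum₀, ← hB]
  have hB2 : b ^ (2 * n) = B * B := by rw [two_mul, pow_add]
  rw [hB2, hk]
  zify
  have hst' : (t₀ : ℤ) + s = c := by exact_mod_cast hst
  linear_combination (B : ℤ) * hst'

lemma top_mem {b : ℕ} (hb : 2 ≤ b) {n : ℕ} (hn : 1 ≤ n) :
    (b - 1) * (b ^ (2 * n) + b ^ n + 1) + (b ^ n + 1) ∈ cunninghamSemigroup b n := by
  rw [mem_iff]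
  refine ⟨1 :: List.replicate (b - 1) n, ?_⟩
  obtain ⟨c, hc⟩ : ∃ c, b = c + 1 := ⟨b - 1, by omega⟩
  have hc' : b - 1 = c := by omega
  have h1 : pSum b (1 :: List.replicate (b - 1) n) = b + (b - 1) * b ^ n := by
    simp [pSum, pSum_cons, List.map_replicate, List.sum_replicate, smul_eq_mul]
  have h2 : (1 :: List.replicate (b - 1) n).length = 1 + (b - 1) := by
    simp [Nat.add_comm]
  have hB2 : b ^ (2 * n) = b ^ n * b ^ n := by rw [two_mul, pow_add]
  rw [h1, h2, hB2, hc']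
  subst hc
  ring

lemma mem_of_gt {b : ℕ} (hb : 2 ≤ b) (hbe : Even b) {n : ℕ} (hn : 1 ≤ n) :
    ∀ m : ℕ, (b - 1) * (b ^ (2 * n) + b ^ n + 1) < m → m ∈ cunninghamSemigroup b n := by
  intro m
  induction m using Nat.strong_induction_on with
  | _ m ih =>
    intro hm
    set F := (b - 1) * (b ^ (2 * n) + b ^ n + 1) with hF
    have hBpos : 1 ≤ b ^ n := Nat.one_le_pow _ _ (by omega)
    rcases Nat.lt_or_ge (F + b ^ n + 1) m with hbig | hsmall
    · have hgen : b ^ n + 1 ∈ cunninghamSemigroup b n :=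
        AddSubmonoid.subset_closure ⟨0, by simp⟩
      have hrec : m - (b ^ n + 1) ∈ cunninghamSemigroup b n :=
        ih _ (by omega) (by omega)
      have hsplit : m - (b ^ n + 1) + (b ^ n + 1) = m := by omega
      rw [← hsplit]
      exact AddSubmonoid.add_mem _ hrec hgen
    · rcases Nat.lt_or_ge m (F + b ^ n + 1) with hlt | hge
      · have h1 : m = F + (m - F) := by omega
        rw [h1]
        exact window_mem hb hbe hn (by omega) (by omega)
      · have hm2 : m = F + (b ^ n + 1) := by omega
        rw [hm2]
        exact top_mem hb hn

lemma zero_notmem {b : ℕ} (hb : 2 ≤ b) (hbe : Even b) :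
    b - 1 ∉ cunninghamSemigroup b 0 := by
  obtain ⟨x, hx⟩ := hbe
  intro hmem
  rw [mem_iff] at hmem
  obtain ⟨l, hl⟩ := hmem
  rw [pow_zero, one_mul] at hl
  by_cases hall : ∀ y ∈ l, y = 0
  · rw [pSum_of_all_zero hall] at hl
    omega
  · push_neg at hall
    obtain ⟨e, hel, he0⟩ := hall
    have h1 : b ^ e ≤ pSum b l := by
      refine List.single_le_sum (fun y _ => Nat.zero_le y) _ ?_
      exact List.mem_map_of_mem hel
    have h2 : b ≤ b ^ e := by
      calc b = b ^ 1 := (pow_one b).symm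
      _ ≤ b ^ e := Nat.pow_le_pow_right (by omega) (by omega)
    have h3 : l.length ≤ pSum b l := length_le_pSum (by omega) l
    omega

lemma zero_mem {b : ℕ} (hb : 2 ≤ b) (hbe : Even b) {m : ℕ} (hm : b ≤ m) :
    m ∈ cunninghamSemigroup b 0 := by
  obtain ⟨x, hx⟩ := hbe
  rw [mem_iff]
  rcases Nat.even_or_odd m with ⟨y, hy⟩ | ⟨y, hy⟩
  · refine ⟨List.replicate y 0, ?_⟩
    simp only [pow_zero, one_mul, pSum, List.map_replicate, List.sum_replicate,
      smul_eq_mul, List.length_replicate]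
    omega
  · have hyx : x ≤ y := by omega
    refine ⟨1 :: List.replicate (y - x) 0, ?_⟩
    simp only [pow_zero, one_mul, pSum, List.map_cons, List.sum_cons, pow_one,
      List.map_replicate, List.sum_replicate, smul_eq_mul, List.length_cons,
      List.length_replicate]
    omega

end CunninghamAux

theorem cunningham_frobenius (b : ℕ) (hb : 2 ≤ b) (hbe : Even b) :
    IsGreatest {m : ℕ | m ∉ cunninghamSemigroup b 0} (b - 1) ∧
    IsGreatest {m : ℕ | m ∉ cunninghamSemigroup b 1} (b ^ 3 - 1) ∧
    (∀ n, 2 ≤ n →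
      IsGreatest {m : ℕ | m ∉ cunninghamSemigroup b n}
        ((b - 1) * (b ^ (2 * n) + b ^ n + 1))) := by
  have hface : ∀ n, 1 ≤ n → IsGreatest {m : ℕ | m ∉ cunninghamSemigroup b n}
      ((b - 1) * (b ^ (2 * n) + b ^ n + 1)) := by
    intro n hn
    constructor
    · exact CunninghamAux.not_mem hb hbe hn
    · intro m hm
      by_contra hcon
      push_neg at hcon
      exact hm (CunninghamAux.mem_of_gt hb hbe hn m hcon)
  refine ⟨?_, ?_, fun n hn => hface n (by omega)⟩
  · constructor
    · exact CunninghamAux.zero_notmem hb hbe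
    · intro m hm
      by_contra hcon
      push_neg at hcon
      exact hm (CunninghamAux.zero_mem hb hbe (by omega))
  · have h1 := hface 1 le_rfl
    have he : (b - 1) * (b ^ (2 * 1) + b ^ 1 + 1) = b ^ 3 - 1 := by
      have h2 : b ^ (2 * 1) = b * b := by ring
      have h3 : b ^ 1 = b := pow_one b
      have h4 : b ^ 3 = b * b * b := by ring
      rw [h2, h3, h4]
      zify [show 1 ≤ b by omega, show 1 ≤ b * b * b by nlinarith]
      ring
    rwa [he] at h1
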